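/- arXiv:1908.06250 — 2 statements merged into one kernel-verified Lean document; each statement's English description precedes it below -/
import Mathlib

section
/- Let G be a strongly connected signed digraph with Laplacian L and mirror Laplacian L̂ = (W·L + Lᵀ·W)/2. Then the null space of L̂ equals the null space of L, i.e., for every x ∈ ℝⁿ, L̂·x = 0 if and only if L·x = 0. -/
open Matrix BigOperators Filter

/-- In-degree of node `i`: sum of absolute values of the `i`-th row of `A`. -/
noncomputable def inDeg {n : ℕ} (A : Matrix (Fin n) (Fin n) ℝ) (i : Fin n) : ℝ := ∑ j, |A i j|

/-- Laplacian `L = Δ − A` of the signed digraph with adjacency matrix `A`. -/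
noncomputable def lapOf {n : ℕ} (A : Matrix (Fin n) (Fin n) ℝ) : Matrix (Fin n) (Fin n) ℝ :=
  Matrix.diagonal (inDeg A) - A

/-- Laplacian `L̄ = Δ − Ā` of the induced unsigned digraph. -/
noncomputable def lapBar {n : ℕ} (A : Matrix (Fin n) (Fin n) ℝ) : Matrix (Fin n) (Fin n) ℝ :=
  Matrix.diagonal (inDeg A) - Matrix.of (fun i j => |A i j|)

/-- `det(L̄_ii)`: determinant of `L̄` with its `i`-th row and column removed. -/
noncomputable def minorDet {n : ℕ} (A : Matrix (Fin n) (Fin n) ℝ) (i : Fin n) : ℝ :=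
  Matrix.det ((lapBar A).submatrix (fun k : {j : Fin n // j ≠ i} => (k : Fin n))
    (fun k : {j : Fin n // j ≠ i} => (k : Fin n)))

/-- `W = diag(det(L̄_11), …, det(L̄_nn))`. -/
noncomputable def Wmat {n : ℕ} (A : Matrix (Fin n) (Fin n) ℝ) : Matrix (Fin n) (Fin n) ℝ :=
  Matrix.diagonal (minorDet A)

/-- Mirror adjacency matrix `Â = (W·A + Aᵀ·W)/2`. -/
noncomputable def mirrorAdj {n : ℕ} (A : Matrix (Fin n) (Fin n) ℝ) : Matrix (Fin n) (Fin n) ℝ :=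
  (1/2 : ℝ) • (Wmat A * A + Aᵀ * Wmat A)

/-- Mirror Laplacian `L̂ = (W·L + Lᵀ·W)/2`. -/
noncomputable def mirrorLap {n : ℕ} (A : Matrix (Fin n) (Fin n) ℝ) : Matrix (Fin n) (Fin n) ℝ :=
  (1/2 : ℝ) • (Wmat A * lapOf A + (lapOf A)ᵀ * Wmat A)

/-- `(j, i)` is a directed edge when `a_ij ≠ 0`; strong connectivity: a directed
path between every ordered pair of distinct nodes. -/
def StronglyConnected {n : ℕ} (A : Matrix (Fin n) (Fin n) ℝ) : Prop :=
  ∀ i j : Fin n, i ≠ j → Relation.TransGen (fun u v => A v u ≠ 0) i j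

/-- `σ` is the diagonal of a gauge transformation: each entry is `±1`. -/
def IsGauge {n : ℕ} (σ : Fin n → ℝ) : Prop := ∀ i, σ i = 1 ∨ σ i = -1

/-- Structural balance: there is a gauge transformation `D = diag σ` with all entries
of `D·A·D` (entrywise `σ i * A i j * σ j`) nonnegative. -/
def StructBalanced {n : ℕ} (A : Matrix (Fin n) (Fin n) ℝ) : Prop :=
  ∃ σ : Fin n → ℝ, IsGauge σ ∧ ∀ i j, 0 ≤ σ i * A i j * σ j

/-- Improved Laplacian potential function
`Φ_e(x) = Σ_i Σ_j det(L̄_ii)·|a_ij|·(x_i − sgn(a_ij)·x_j)²`. -/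
noncomputable def PhiE {n : ℕ} (A : Matrix (Fin n) (Fin n) ℝ) (x : Fin n → ℝ) : ℝ :=
  ∑ i, ∑ j, minorDet A i * |A i j| * (x i - Real.sign (A i j) * x j) ^ 2


section helpers
variable {n : ℕ} (A : Matrix (Fin n) (Fin n) ℝ)

lemma mysign_abs (a : ℝ) : |a| * Real.sign a = a := by
  rcases lt_trichotomy a 0 with h | h | h
  · rw [Real.sign_of_neg h, abs_of_neg h]; ring
  · simp [h]
  · rw [Real.sign_of_pos h, abs_of_pos h]; ring

lemma mysign_abs_sq (a : ℝ) : |a| * (Real.sign a) ^ 2 = |a| := by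
  rcases lt_trichotomy a 0 with h | h | h
  · rw [Real.sign_of_neg h]; ring
  · simp [h]
  · rw [Real.sign_of_pos h]; ring

lemma lapBar_mulVec (v : Fin n → ℝ) (i : Fin n) :
    (lapBar A *ᵥ v) i = inDeg A i * v i - ∑ j, |A i j| * v j := by
  rw [lapBar, Matrix.sub_mulVec]
  simp [Matrix.mulVec_diagonal, Matrix.mulVec, dotProduct, Matrix.diagonal_apply,
    Finset.sum_ite_eq' Finset.univ i (fun j => inDeg A j * v j)]

/-- Propagation step: if `lapBar A *ᵥ v` vanishes at `u`, `v` is bounded by `M`,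
and `v u = M`, then `v j = M` for every out-neighbour `j` of `u`. -/
lemma prop_step (v : Fin n → ℝ) (M : ℝ) (hM : ∀ j, v j ≤ M)
    (u : Fin n) (hu : (lapBar A *ᵥ v) u = 0) (huM : v u = M)
    (j : Fin n) (hj : A u j ≠ 0) : v j = M := by
  rw [lapBar_mulVec] at hu
  have hsum : ∑ k, |A u k| * (M - v k) = 0 := by
    have : ∑ k, |A u k| * (M - v k) = (∑ k, |A u k|) * M - ∑ k, |A u k| * v k := by
      rw [Finset.sum_mul]; rw [← Finset.sum_sub_distrib]; congr 1; ext k; ring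
    rw [this]
    have : (∑ k, |A u k|) = inDeg A u := rfl
    rw [this]
    rw [huM] at hu; linarith
  have hterm : ∀ k ∈ Finset.univ, (0:ℝ) ≤ |A u k| * (M - v k) := by
    intro k _
    exact mul_nonneg (abs_nonneg _) (by linarith [hM k])
  have := (Finset.sum_eq_zero_iff_of_nonneg hterm).mp hsum j (Finset.mem_univ j)
  have habs : |A u j| ≠ 0 := fun h => hj (abs_eq_zero.mp h)
  have := mul_eq_zero.mp this
  rcases this with h | h
  · exact absurd h habs
  · linarith

/-- If `lapBar A *ᵥ v = 0` and `G` is strongly connected, `v` is constant. -/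
lemma kernel_const (hsc : StronglyConnected A) (v : Fin n → ℝ)
    (hv : lapBar A *ᵥ v = 0) (s t : Fin n) : v s = v t := by
  obtain ⟨k, -, hk⟩ := Finset.exists_max_image Finset.univ v ⟨s, Finset.mem_univ s⟩
  have hM : ∀ j, v j ≤ v k := fun j => hk j (Finset.mem_univ j)
  have key : ∀ a : Fin n, v a = v k := by
    intro a
    by_cases ha : a = k
    · rw [ha]
    · have htg := hsc a k ha
      induction htg using Relation.TransGen.head_induction_on with
      | single h => exact prop_step A v (v k) hM k (congrFun hv k) rfl _ h
      | head h _ ih2 =>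
        rename_i a' c _
        have hc : v c = v k := by
          by_cases hck : c = k
          · rw [hck]
          · exact ih2 hck
        exact prop_step A v (v k) hM c (congrFun hv c) hc _ h
  rw [key s, key t]
end helpers

/-- Levy–Desplanques: a strictly (row) diagonally dominant real matrix is nonsingular. -/
lemma det_ne_zero_of_sdd {ι : Type*} [Fintype ι] [DecidableEq ι] (B : Matrix ι ι ℝ)
    (h : ∀ u, ∑ k ∈ Finset.univ.erase u, |B u k| < |B u u|) : B.det ≠ 0 := by
  intro hdet
  obtain ⟨v, hv0, hv⟩ := (Matrix.exists_mulVec_eq_zero_iff).mpr hdet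
  obtain ⟨c, hc⟩ := Function.ne_iff.mp hv0
  obtain ⟨u, -, hk⟩ := Finset.exists_max_image Finset.univ (fun k => |v k|) ⟨c, Finset.mem_univ c⟩
  have hmax : ∀ j, |v j| ≤ |v u| := fun j => hk j (Finset.mem_univ j)
  have hvu : 0 < |v u| := lt_of_lt_of_le (abs_pos.mpr hc) (hmax c)
  have h0 : ∑ k, B u k * v k = 0 := congrFun hv u
  have h1 : B u u * v u = -∑ k ∈ Finset.univ.erase u, B u k * v k := by
    rw [← Finset.add_sum_erase _ _ (Finset.mem_univ u)] at h0
    linarith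
  have h2 : |B u u| * |v u| ≤ (∑ k ∈ Finset.univ.erase u, |B u k|) * |v u| := by
    calc |B u u| * |v u| = |B u u * v u| := (abs_mul _ _).symm
    _ = |∑ k ∈ Finset.univ.erase u, B u k * v k| := by rw [h1, abs_neg]
    _ ≤ ∑ k ∈ Finset.univ.erase u, |B u k * v k| := Finset.abs_sum_le_sum_abs _ _
    _ = ∑ k ∈ Finset.univ.erase u, |B u k| * |v k| := by simp [abs_mul]
    _ ≤ ∑ k ∈ Finset.univ.erase u, |B u k| * |v u| :=
        Finset.sum_le_sum fun k _ => mul_le_mul_of_nonneg_left (hmax k) (abs_nonneg _)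
    _ = (∑ k ∈ Finset.univ.erase u, |B u k|) * |v u| := (Finset.sum_mul _ _ _).symm
  nlinarith [h u]

/-- A strictly diagonally dominant real matrix with positive diagonal has positive
determinant. -/
lemma det_pos_of_sdd {ι : Type*} [Fintype ι] [DecidableEq ι] (B : Matrix ι ι ℝ)
    (hd : ∀ u, 0 < B u u)
    (h : ∀ u, ∑ k ∈ Finset.univ.erase u, |B u k| < B u u) : 0 < B.det := by
  set C : ℝ → Matrix ι ι ℝ :=
    fun t => Matrix.of fun u k => if u = k then B u u else t * B u k with hC
  have hC1 : C 1 = B := by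
    ext u k; by_cases huk : u = k <;> simp [hC, huk]
  have hC0 : C 0 = Matrix.diagonal fun u => B u u := by
    ext u k; by_cases huk : u = k <;> simp [hC, huk, Matrix.diagonal_apply, Ne.symm]
  have hcont : Continuous fun t => (C t).det := by
    apply Continuous.matrix_det
    apply continuous_matrix
    intro u k
    by_cases huk : u = k <;> simp [hC, huk]
    · exact continuous_const
    · exact continuous_id.mul continuous_const
  have hne : ∀ t ∈ Set.Icc (0:ℝ) 1, (C t).det ≠ 0 := by
    intro t ht
    apply det_ne_zero_of_sdd
    intro u
    have hdiag : C t u u = B u u := by simp [hC]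
    rw [hdiag, abs_of_pos (hd u)]
    calc ∑ k ∈ Finset.univ.erase u, |C t u k|
        = ∑ k ∈ Finset.univ.erase u, |t| * |B u k| := by
          apply Finset.sum_congr rfl
          intro k hkmem
          have : u ≠ k := fun hh => (Finset.ne_of_mem_erase hkmem) hh.symm
          simp [hC, this, abs_mul]
    _ = |t| * ∑ k ∈ Finset.univ.erase u, |B u k| := (Finset.mul_sum _ _ _).symm
    _ ≤ 1 * ∑ k ∈ Finset.univ.erase u, |B u k| := by
          apply mul_le_mul_of_nonneg_right _ (Finset.sum_nonneg fun k _ => abs_nonneg _)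
          rw [abs_le]; constructor <;> [linarith [ht.1]; exact ht.2]
    _ = ∑ k ∈ Finset.univ.erase u, |B u k| := one_mul _
    _ < B u u := h u
  have hpos0 : 0 < (C 0).det := by
    rw [hC0, Matrix.det_diagonal]
    exact Finset.prod_pos fun u _ => hd u
  by_contra hle
  push_neg at hle
  have hneg : (C 1).det < 0 :=
    lt_of_le_of_ne (by rwa [hC1]) (hne 1 ⟨zero_le_one, le_refl 1⟩)
  have := intermediate_value_Icc' (zero_le_one (α := ℝ)) hcont.continuousOn
  obtain ⟨t, ht, htv⟩ := this ⟨hneg.le, hpos0.le⟩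
  exact hne t ht htv


section minorpos
variable {n : ℕ} (A : Matrix (Fin n) (Fin n) ℝ)

lemma inDeg_nonneg (i : Fin n) : 0 ≤ inDeg A i :=
  Finset.sum_nonneg fun j _ => abs_nonneg _

lemma lapBar_apply (i j : Fin n) :
    lapBar A i j = (if i = j then inDeg A i else 0) - |A i j| := by
  simp [lapBar, Matrix.diagonal_apply]

/-- Propagation step along absolute values. -/
lemma prop_step_abs (z : Fin n → ℝ) (M : ℝ) (hM : ∀ j, |z j| ≤ M)
    (u : Fin n) (hu : inDeg A u * z u = ∑ j, |A u j| * z j) (huM : |z u| = M)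
    (j : Fin n) (hj : A u j ≠ 0) : |z j| = M := by
  have h1 : inDeg A u * M ≤ ∑ k, |A u k| * |z k| := by
    calc inDeg A u * M = |inDeg A u * z u| := by
          rw [abs_mul, abs_of_nonneg (inDeg_nonneg A u), huM]
    _ = |∑ k, |A u k| * z k| := by rw [hu]
    _ ≤ ∑ k, |(|A u k| * z k)| := Finset.abs_sum_le_sum_abs _ _
    _ = ∑ k, |A u k| * |z k| := by simp [abs_mul, abs_abs]
  have hsum : ∑ k, |A u k| * (M - |z k|) = 0 := by
    have hexp : ∑ k, |A u k| * (M - |z k|)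
        = inDeg A u * M - ∑ k, |A u k| * |z k| := by
      rw [inDeg, Finset.sum_mul, ← Finset.sum_sub_distrib]
      congr 1; ext k; ring
    have hnn : (0:ℝ) ≤ ∑ k, |A u k| * (M - |z k|) :=
      Finset.sum_nonneg fun k _ =>
        mul_nonneg (abs_nonneg _) (by linarith [hM k])
    linarith
  have := (Finset.sum_eq_zero_iff_of_nonneg
    (fun k _ => mul_nonneg (abs_nonneg _) (by linarith [hM k]))).mp hsum j (Finset.mem_univ j)
  rcases mul_eq_zero.mp this with hcase | hcase
  · exact absurd (abs_eq_zero.mp hcase) hj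
  · linarith

/-- The principal minors of `L̄` are positive when `G` is strongly connected. -/
lemma minorDet_pos (hdiag : ∀ i, A i i = 0) (hsc : StronglyConnected A) (i : Fin n) :
    0 < minorDet A i := by
  classical
  set c : {j : Fin n // j ≠ i} → Fin n := fun k => (k : Fin n) with hc
  set B : Matrix {j : Fin n // j ≠ i} {j : Fin n // j ≠ i} ℝ :=
    (lapBar A).submatrix c c with hB
  have hBdet : minorDet A i = B.det := rfl
  -- off-diagonal row-sum bound for `B`
  have hrow : ∀ u : {j : Fin n // j ≠ i},
      ∑ k ∈ Finset.univ.erase u, |B u k| ≤ inDeg A u := by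
    intro u
    have hterm : ∀ k ∈ Finset.univ.erase u, |B u k| = |A (u:Fin n) (k:Fin n)| := by
      intro k hk
      have hne : (u:Fin n) ≠ (k:Fin n) := by
        intro hh
        exact (Finset.ne_of_mem_erase hk) (Subtype.ext hh.symm)
      rw [hB, Matrix.submatrix_apply, lapBar_apply, if_neg hne]
      simp [hc]
    rw [Finset.sum_congr rfl hterm]
    have himg : ∑ k ∈ Finset.univ.erase u, |A (u:Fin n) (k:Fin n)|
        = ∑ j ∈ (Finset.univ.erase u).image c, |A (u:Fin n) j| := by
      rw [Finset.sum_image]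
      intro a _ b _ hab
      exact Subtype.ext hab
    rw [himg, inDeg]
    apply Finset.sum_le_sum_of_subset_of_nonneg (Finset.subset_univ _)
    intro j _ _
    exact abs_nonneg _
  have hBdiag : ∀ u : {j : Fin n // j ≠ i}, B u u = inDeg A u := by
    intro u
    rw [hB, Matrix.submatrix_apply, lapBar_apply, if_pos rfl, hdiag]
    simp [hc]
  -- (a) nonnegativity by perturbation
  have hge : 0 ≤ B.det := by
    have hcont : Continuous fun ε : ℝ => (B + ε • (1 : Matrix _ _ ℝ)).det := by
      apply Continuous.matrix_det
      apply continuous_matrix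
      intro u k
      simp only [Matrix.add_apply, Matrix.smul_apply, smul_eq_mul]
      exact continuous_const.add (continuous_id.mul continuous_const)
    have hpos : ∀ ε : ℝ, 0 < ε → 0 < (B + ε • (1 : Matrix _ _ ℝ)).det := by
      intro ε hε
      apply det_pos_of_sdd
      · intro u
        simp only [Matrix.add_apply, Matrix.smul_apply, Matrix.one_apply_eq, smul_eq_mul,
          mul_one, hBdiag]
        have := inDeg_nonneg A (u : Fin n)
        linarith
      · intro u
        have heq : ∑ k ∈ Finset.univ.erase u, |(B + ε • (1 : Matrix {j : Fin n // j ≠ i} {j : Fin n // j ≠ i} ℝ)) u k|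
            = ∑ k ∈ Finset.univ.erase u, |B u k| := by
          apply Finset.sum_congr rfl
          intro k hk
          have : u ≠ k := fun hh => (Finset.ne_of_mem_erase hk) hh.symm
          simp [Matrix.one_apply_ne this]
        rw [heq]
        simp only [Matrix.add_apply, Matrix.smul_apply, Matrix.one_apply_eq, smul_eq_mul,
          mul_one, hBdiag]
        calc ∑ k ∈ Finset.univ.erase u, |B u k| ≤ inDeg A u := hrow u
        _ < inDeg A u + ε := by linarith
    have htd : Filter.Tendsto (fun ε : ℝ => (B + ε • (1 : Matrix _ _ ℝ)).det)
        (nhdsWithin 0 (Set.Ioi 0)) (nhds ((B + (0:ℝ) • (1 : Matrix _ _ ℝ)).det)) :=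
      (hcont.tendsto 0).mono_left nhdsWithin_le_nhds
    have hB0 : (B + (0:ℝ) • (1 : Matrix _ _ ℝ)).det = B.det := by simp
    rw [← hB0]
    exact ge_of_tendsto htd (eventually_nhdsWithin_of_forall fun ε hε => (hpos ε hε).le)
  -- (b) nonvanishing by the maximum principle and strong connectivity
  have hne : B.det ≠ 0 := by
    intro hdet
    obtain ⟨y, hy0, hy⟩ := (Matrix.exists_mulVec_eq_zero_iff).mpr hdet
    obtain ⟨cc, hcc⟩ := Function.ne_iff.mp hy0
    set z : Fin n → ℝ := fun j => if h : j = i then 0 else y ⟨j, h⟩ with hz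
    have hzi : z i = 0 := by simp [hz]
    have hzc : z (cc : Fin n) = y cc := by
      rw [hz]; simp only [dif_neg cc.2]
    obtain ⟨u, -, hk⟩ := Finset.exists_max_image Finset.univ (fun j => |z j|)
      ⟨i, Finset.mem_univ i⟩
    have hmax : ∀ j, |z j| ≤ |z u| := fun j => hk j (Finset.mem_univ j)
    have hMpos : 0 < |z u| := by
      have : 0 < |z (cc : Fin n)| := by rw [hzc]; exact abs_pos.mpr hcc
      exact lt_of_lt_of_le this (hmax _)
    -- row equations for all a ≠ i
    have hrowEq : ∀ a : Fin n, a ≠ i → inDeg A a * z a = ∑ j, |A a j| * z j := by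
      intro a ha
      have h0 : (B *ᵥ y) ⟨a, ha⟩ = 0 := congrFun hy ⟨a, ha⟩
      have h1 : ∑ k : {j : Fin n // j ≠ i}, lapBar A a (k : Fin n) * z (k : Fin n) = 0 := by
        rw [← h0, Matrix.mulVec, dotProduct]
        apply Finset.sum_congr rfl
        intro k _
        rw [hB, Matrix.submatrix_apply]
        congr 1
        rw [hz]; simp only [dif_neg k.2]
      have h2 : ∑ k : {j : Fin n // j ≠ i}, lapBar A a (k : Fin n) * z (k : Fin n)
          = ∑ j ∈ Finset.univ.erase i, lapBar A a j * z j := by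
        rw [← Finset.sum_subtype (Finset.univ.erase i)
          (fun j => by simp [Finset.mem_erase]) (fun j => lapBar A a j * z j)]
      have h3 : ∑ j, lapBar A a j * z j = 0 := by
        rw [← Finset.add_sum_erase _ _ (Finset.mem_univ i), hzi]
        rw [h2] at h1
        rw [h1]; ring
      have h4 : (lapBar A *ᵥ z) a = 0 := by
        rw [Matrix.mulVec, dotProduct]; exact h3
      rw [lapBar_mulVec] at h4
      linarith
    have hui : u ≠ i := by
      intro hh
      rw [hh, hzi] at hMpos
      simp at hMpos
    -- walk from i to u and propagate the maximum back to i
    have key : ∀ a : Fin n, Relation.TransGen (fun p q => A q p ≠ 0) a u → |z a| = |z u| := by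
      intro a htg
      induction htg using Relation.TransGen.head_induction_on with
      | single h =>
        exact prop_step_abs A z (|z u|) hmax u (hrowEq u hui) rfl _ h
      | head h htg2 ih2 =>
        rename_i a' cmid
        have hcm : |z cmid| = |z u| := ih2
        have hcmi : cmid ≠ i := by
          intro hh
          rw [hh, hzi] at hcm
          simp at hcm
          linarith [hMpos, hcm]
        exact prop_step_abs A z (|z u|) hmax cmid (hrowEq cmid hcmi) hcm _ h
    have : |z i| = |z u| := key i (hsc i u (fun hh => hui hh.symm))
    rw [hzi] at this
    simp at this
    linarith [hMpos]
  rw [hBdet]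
  exact lt_of_le_of_ne hge (Ne.symm hne)

end minorpos

section leftkernel
variable {m : ℕ} (A : Matrix (Fin (m+1)) (Fin (m+1)) ℝ)

lemma lapBar_mulVec_one : lapBar A *ᵥ (fun _ => (1:ℝ)) = 0 := by
  funext i
  rw [lapBar_mulVec]
  simp [inDeg]

lemma det_lapBar_zero : (lapBar A).det = 0 := by
  apply (Matrix.exists_mulVec_eq_zero_iff).mp
  refine ⟨fun _ => (1:ℝ), ?_, lapBar_mulVec_one A⟩
  intro h
  have := congrFun h 0
  simp at this

lemma adjugate_diag (i : Fin (m+1)) : (lapBar A).adjugate i i = minorDet A i := by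
  rw [Matrix.adjugate_fin_succ_eq_det_submatrix]
  have hpow : (-1 : ℝ) ^ ((i:ℕ) + (i:ℕ)) = 1 := Even.neg_one_pow ⟨i, rfl⟩
  rw [hpow, one_mul, minorDet]
  rw [← Matrix.det_submatrix_equiv_self (finSuccAboveEquiv i)
    ((lapBar A).submatrix (fun k : {j : Fin (m+1) // j ≠ i} => (k : Fin (m+1)))
      (fun k : {j : Fin (m+1) // j ≠ i} => (k : Fin (m+1))))]
  rw [Matrix.submatrix_submatrix]
  rfl

lemma adjugate_const (hsc : StronglyConnected A) (k j : Fin (m+1)) :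
    (lapBar A).adjugate k j = minorDet A j := by
  have hm : lapBar A * (lapBar A).adjugate = 0 := by
    rw [Matrix.mul_adjugate, det_lapBar_zero]; simp
  have hcol : lapBar A *ᵥ (fun r => (lapBar A).adjugate r j) = 0 := by
    funext r
    have := congrFun (congrFun hm r) j
    rw [Matrix.mul_apply] at this
    simpa [Matrix.mulVec, dotProduct] using this
  have hkj := kernel_const A hsc _ hcol k j
  rw [hkj, adjugate_diag]

lemma left_kernel (hsc : StronglyConnected A) (j : Fin (m+1)) :
    ∑ k, minorDet A k * lapBar A k j = 0 := by
  have hm : (lapBar A).adjugate * lapBar A = 0 := by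
    rw [Matrix.adjugate_mul, det_lapBar_zero]; simp
  have hrow := congrFun (congrFun hm j) j
  rw [Matrix.mul_apply] at hrow
  calc ∑ k, minorDet A k * lapBar A k j
      = ∑ k, (lapBar A).adjugate j k * lapBar A k j := by
        apply Finset.sum_congr rfl
        intro k _
        rw [adjugate_const A hsc j k]
  _ = 0 := hrow

lemma weighted_balance (hsc : StronglyConnected A) (j : Fin (m+1)) :
    ∑ k, minorDet A k * |A k j| = minorDet A j * inDeg A j := by
  have h := left_kernel A hsc j
  simp only [lapBar_apply, mul_sub] at h
  rw [Finset.sum_sub_distrib] at h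
  have h1 : ∑ k, minorDet A k * (if k = j then inDeg A k else 0)
      = minorDet A j * inDeg A j := by
    rw [Finset.sum_eq_single j]
    · simp
    · intro b _ hb; simp [hb]
    · intro hj; exact absurd (Finset.mem_univ j) hj
  rw [h1] at h
  linarith
end leftkernel

section main
variable {n : ℕ} (A : Matrix (Fin n) (Fin n) ℝ)

lemma lapOf_apply (i j : Fin n) :
    lapOf A i j = (if i = j then inDeg A i else 0) - A i j := by
  simp [lapOf, Matrix.diagonal_apply]

lemma lapOf_mulVec (x : Fin n → ℝ) (i : Fin n) :
    (lapOf A *ᵥ x) i = inDeg A i * x i - ∑ j, A i j * x j := by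
  rw [lapOf, Matrix.sub_mulVec]
  simp [Matrix.mulVec_diagonal, Matrix.mulVec, dotProduct, Matrix.diagonal_apply,
    Finset.sum_ite_eq' Finset.univ i (fun j => inDeg A j * x j)]

lemma hterm_expand (a w' xi xj : ℝ) : w' * |a| * (xi - Real.sign a * xj)^2
    = w' * |a| * xi^2 + w' * |a| * xj^2 - 2 * (w' * a * (xi * xj)) := by
  have h1 := mysign_abs a
  have h2 := mysign_abs_sq a
  linear_combination (w' * xj^2) * h2 - 2 * w' * xi * xj * h1

/-- The quadratic form of the mirror Laplacian. -/
lemma mirror_quadform (x : Fin n → ℝ) :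
    x ⬝ᵥ (mirrorLap A *ᵥ x) = ∑ i, minorDet A i * x i * ((lapOf A *ᵥ x) i) := by
  rw [mirrorLap, Matrix.smul_mulVec, Matrix.add_mulVec, dotProduct_smul, dotProduct_add,
    ← Matrix.mulVec_mulVec, ← Matrix.mulVec_mulVec,
    dotProduct_mulVec x ((lapOf A)ᵀ), Matrix.vecMul_transpose]
  have h1 : x ⬝ᵥ (Wmat A *ᵥ (lapOf A *ᵥ x))
      = ∑ i, minorDet A i * x i * ((lapOf A *ᵥ x) i) := by
    rw [dotProduct]
    apply Finset.sum_congr rfl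
    intro i _
    rw [Wmat, Matrix.mulVec_diagonal]
    ring
  have h2 : (lapOf A *ᵥ x) ⬝ᵥ (Wmat A *ᵥ x)
      = ∑ i, minorDet A i * x i * ((lapOf A *ᵥ x) i) := by
    rw [dotProduct]
    apply Finset.sum_congr rfl
    intro i _
    rw [Wmat, Matrix.mulVec_diagonal]
    ring
  rw [h1, h2, smul_eq_mul]
  ring

/-- The energy identity: `Φ(x) = 2 xᵀ W L x`. -/
lemma energy_identity (hsc : StronglyConnected A) (hmn : ∃ m, n = m + 1) (x : Fin n → ℝ) :
    ∑ i, ∑ j, minorDet A i * |A i j| * (x i - Real.sign (A i j) * x j) ^ 2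
      = 2 * ∑ i, minorDet A i * x i * ((lapOf A *ᵥ x) i) := by
  obtain ⟨m, rfl⟩ := hmn
  have hsplit : ∀ i j : Fin (m+1), minorDet A i * |A i j| * (x i - Real.sign (A i j) * x j) ^ 2
      = minorDet A i * |A i j| * x i^2 + minorDet A i * |A i j| * x j^2
        - 2 * (minorDet A i * A i j * (x i * x j)) := fun i j => hterm_expand _ _ _ _
  calc ∑ i, ∑ j, minorDet A i * |A i j| * (x i - Real.sign (A i j) * x j) ^ 2
      = ∑ i, ∑ j, (minorDet A i * |A i j| * x i^2 + minorDet A i * |A i j| * x j^2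
        - 2 * (minorDet A i * A i j * (x i * x j))) := by
        exact Finset.sum_congr rfl fun i _ => Finset.sum_congr rfl fun j _ => hsplit i j
  _ = (∑ i, ∑ j, minorDet A i * |A i j| * x i^2)
      + (∑ i, ∑ j, minorDet A i * |A i j| * x j^2)
      - 2 * ∑ i, ∑ j, minorDet A i * A i j * (x i * x j) := by
        simp only [Finset.sum_sub_distrib, Finset.sum_add_distrib, ← Finset.mul_sum]
  _ = (∑ i, minorDet A i * inDeg A i * x i^2)
      + (∑ j, minorDet A j * inDeg A j * x j^2)
      - 2 * ∑ i, ∑ j, minorDet A i * A i j * (x i * x j) := by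
        have e1 : ∑ i, ∑ j, minorDet A i * |A i j| * x i^2
            = ∑ i, minorDet A i * inDeg A i * x i^2 := by
          apply Finset.sum_congr rfl
          intro i _
          rw [← Finset.sum_mul, ← Finset.mul_sum]
          rw [show (∑ j, |A i j|) = inDeg A i from rfl]
        have e2 : ∑ i, ∑ j, minorDet A i * |A i j| * x j^2
            = ∑ j, minorDet A j * inDeg A j * x j^2 := by
          rw [Finset.sum_comm]
          apply Finset.sum_congr rfl
          intro j _
          have hs : ∑ i, minorDet A i * |A i j| * x j ^ 2
              = (∑ i, minorDet A i * |A i j|) * x j ^ 2 := (Finset.sum_mul _ _ _).symm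
          rw [hs, weighted_balance A hsc j]
        rw [e1, e2]
  _ = 2 * ∑ i, minorDet A i * x i * ((lapOf A *ᵥ x) i) := by
        have : ∀ i, minorDet A i * x i * ((lapOf A *ᵥ x) i)
            = minorDet A i * inDeg A i * x i^2 - ∑ j, minorDet A i * A i j * (x i * x j) := by
          intro i
          rw [lapOf_mulVec, mul_sub, Finset.mul_sum]
          have h1 : minorDet A i * x i * (inDeg A i * x i)
              = minorDet A i * inDeg A i * x i ^ 2 := by ring
          rw [h1]
          congr 1
          apply Finset.sum_congr rfl
          intro j _
          ring
        rw [Finset.sum_congr rfl fun i _ => this i, Finset.sum_sub_distrib]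
        ring_nf
end main

section final
variable {n : ℕ} (A : Matrix (Fin n) (Fin n) ℝ)

lemma mysign_mul (a : ℝ) : a * Real.sign a = |a| := by
  rcases lt_trichotomy a 0 with h | h | h
  · rw [Real.sign_of_neg h, abs_of_neg h]; ring
  · simp [h]
  · rw [Real.sign_of_pos h, abs_of_pos h]; ring

lemma edge_condition (hn : 2 ≤ n) (hdiag : ∀ i, A i i = 0) (hsc : StronglyConnected A)
    (x : Fin n → ℝ)
    (hQ : ∑ i, minorDet A i * x i * ((lapOf A *ᵥ x) i) = 0) :
    ∀ i j, A i j ≠ 0 → x i = Real.sign (A i j) * x j := by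
  have hw : ∀ i, 0 < minorDet A i := minorDet_pos A hdiag hsc
  have hPhi := energy_identity A hsc ⟨n-1, by omega⟩ x
  rw [hQ, mul_zero] at hPhi
  have hnn : ∀ i j : Fin n, (0:ℝ) ≤ minorDet A i * |A i j| * (x i - Real.sign (A i j) * x j) ^ 2 :=
    fun i j => mul_nonneg (mul_nonneg (hw i).le (abs_nonneg _)) (sq_nonneg _)
  have houter := (Finset.sum_eq_zero_iff_of_nonneg
    (fun i _ => Finset.sum_nonneg fun j _ => hnn i j)).mp hPhi
  intro i j hij
  have hinner := (Finset.sum_eq_zero_iff_of_nonneg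
    (fun j _ => hnn i j)).mp (houter i (Finset.mem_univ i)) j (Finset.mem_univ j)
  rw [mul_assoc] at hinner
  rcases mul_eq_zero.mp hinner with h | h
  · exact absurd h (ne_of_gt (hw i))
  rcases mul_eq_zero.mp h with h2 | h2
  · exact absurd (abs_eq_zero.mp h2) hij
  · have h3 := pow_eq_zero_iff (n := 2) (by norm_num) |>.mp h2
    linarith


end final

/-- the null space of the mirror Laplacian `L̂` equals that of `L`. -/
theorem mirrorLap_nullspace_eq (n : ℕ) (hn : 2 ≤ n)
    (A : Matrix (Fin n) (Fin n) ℝ)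
    (hdiag : ∀ i, A i i = 0) (hdigon : ∀ i j, 0 ≤ A i j * A j i)
    (hsc : StronglyConnected A) :
    ∀ x : Fin n → ℝ, mirrorLap A *ᵥ x = 0 ↔ lapOf A *ᵥ x = 0 := by
  intro x
  constructor
  · intro h
    have hQ : ∑ i, minorDet A i * x i * ((lapOf A *ᵥ x) i) = 0 := by
      rw [← mirror_quadform, h]
      simp
    have hedge := edge_condition A hn hdiag hsc x hQ
    funext i
    rw [Pi.zero_apply, lapOf_mulVec]
    have hAx : ∑ j, A i j * x j = ∑ j, |A i j| * x i := by
      apply Finset.sum_congr rfl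
      intro j _
      by_cases hij : A i j = 0
      · simp [hij]
      · rw [hedge i j hij, ← mul_assoc, mysign_abs]
    rw [hAx, ← Finset.sum_mul, show (∑ j, |A i j|) = inDeg A i from rfl]
    ring
  · intro h
    have hQ : ∑ i, minorDet A i * x i * ((lapOf A *ᵥ x) i) = 0 := by
      rw [h]
      simp
    have hedge := edge_condition A hn hdiag hsc x hQ
    obtain ⟨m, rfl⟩ : ∃ m, n = m + 1 := ⟨n - 1, by omega⟩
    funext i
    rw [mirrorLap, Matrix.smul_mulVec, Matrix.add_mulVec, Pi.smul_apply, Pi.add_apply]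
    have h1 : ((Wmat A * lapOf A) *ᵥ x) i = 0 := by
      rw [← Matrix.mulVec_mulVec, h]
      simp
    have h2 : (((lapOf A)ᵀ * Wmat A) *ᵥ x) i = 0 := by
      rw [← Matrix.mulVec_mulVec]
      have hexp : ((lapOf A)ᵀ *ᵥ (Wmat A *ᵥ x)) i
          = ∑ k, lapOf A k i * (minorDet A k * x k) := by
        rw [Matrix.mulVec, dotProduct]
        apply Finset.sum_congr rfl
        intro k _
        rw [Matrix.transpose_apply, Wmat, Matrix.mulVec_diagonal]
      rw [hexp]
      have hsplit : ∀ k, lapOf A k i * (minorDet A k * x k)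
          = (if k = i then inDeg A k else 0) * (minorDet A k * x k)
            - minorDet A k * (A k i * x k) := by
        intro k
        rw [lapOf_apply]
        ring
      rw [Finset.sum_congr rfl fun k _ => hsplit k, Finset.sum_sub_distrib]
      have hfirst : ∑ k, (if k = i then inDeg A k else 0) * (minorDet A k * x k)
          = inDeg A i * (minorDet A i * x i) := by
        rw [Finset.sum_eq_single i]
        · simp
        · intro b _ hb; simp [hb]
        · intro hi; exact absurd (Finset.mem_univ i) hi
      have hsecond : ∑ k, minorDet A k * (A k i * x k)
          = ∑ k, minorDet A k * |A k i| * x i := by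
        apply Finset.sum_congr rfl
        intro k _
        by_cases hki : A k i = 0
        · simp [hki]
        · rw [hedge k i hki]
          have : A k i * (Real.sign (A k i) * x i) = |A k i| * x i := by
            rw [← mul_assoc, mysign_mul]
          rw [this]
          ring
      rw [hfirst, hsecond, ← Finset.sum_mul, weighted_balance A hsc i]
      ring
    rw [h1, h2]
    simp
end

section
/- Let G be a strongly connected signed digraph with mirror Laplacian L̂ = (W·L + Lᵀ·W)/2. Then G is structurally balanced if and only if there exists a gauge transformation D with every entry of D·A·D nonnegative such that the null space of L̂ equals span{D·1_n}, where 1_n is the all-ones vector in ℝⁿ. -/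
open Matrix BigOperators Filter

variable {n : ℕ}

lemma lapBar_eq_lapOf {B : Matrix (Fin n) (Fin n) ℝ} (hB : ∀ i j, 0 ≤ B i j) :
    lapBar B = lapOf B := by
  unfold lapBar lapOf
  congr 1
  ext i j
  simp [abs_of_nonneg (hB i j)]

lemma inDeg_eq_sum {B : Matrix (Fin n) (Fin n) ℝ} (hB : ∀ i j, 0 ≤ B i j) (i : Fin n) :
    inDeg B i = ∑ j, B i j :=
  Finset.sum_congr rfl fun j _ => abs_of_nonneg (hB i j)

lemma lap_mulVec (B : Matrix (Fin n) (Fin n) ℝ) (x : Fin n → ℝ) (k : Fin n) :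
    (lapOf B *ᵥ x) k = inDeg B k * x k - ∑ j, B k j * x j := by
  simp [lapOf, Matrix.mulVec, dotProduct, Matrix.sub_apply, Matrix.diagonal_apply,
    sub_mul, Finset.sum_sub_distrib, ite_mul, Finset.sum_ite_eq, zero_mul]

lemma lap_row_zero {B : Matrix (Fin n) (Fin n) ℝ} (hB : ∀ i j, 0 ≤ B i j) (u : Fin n)
    (x : Fin n → ℝ) (hx : lapOf B *ᵥ x = 0) :
    ∑ j, B u j * (x u - x j) = 0 := by
  have h1 : (lapOf B *ᵥ x) u = 0 := by rw [hx]; rfl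
  rw [lap_mulVec] at h1
  calc ∑ j, B u j * (x u - x j)
      = (∑ j, B u j) * x u - ∑ j, B u j * x j := by
        rw [Finset.sum_mul, ← Finset.sum_sub_distrib]
        exact Finset.sum_congr rfl fun j _ => by ring
    _ = inDeg B u * x u - ∑ j, B u j * x j := by rw [inDeg_eq_sum hB]
    _ = 0 := h1

lemma ker_lap_const (hn : 2 ≤ n) {B : Matrix (Fin n) (Fin n) ℝ}
    (hB : ∀ i j, 0 ≤ B i j) (hsc : StronglyConnected B)
    {x : Fin n → ℝ} (hx : lapOf B *ᵥ x = 0) : ∀ a b, x a = x b := by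
  haveI : Nonempty (Fin n) := ⟨⟨0, by omega⟩⟩
  obtain ⟨k, -, hk⟩ := Finset.exists_max_image Finset.univ x Finset.univ_nonempty
  have step : ∀ v, x v = x k → ∀ u, B v u ≠ 0 → x u = x k := by
    intro v hv u hBu
    have h0 := lap_row_zero hB v x hx
    have hterm : ∀ j ∈ Finset.univ, (0:ℝ) ≤ B v j * (x v - x j) := fun j _ =>
      mul_nonneg (hB v j) (by rw [hv]; linarith [hk j (Finset.mem_univ j)])
    have h1 := (Finset.sum_eq_zero_iff_of_nonneg hterm).mp h0 u (Finset.mem_univ u)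
    rcases mul_eq_zero.mp h1 with h | h
    · exact absurd h hBu
    · have : x u = x v := by linarith
      rw [this, hv]
  have main : ∀ a, x a = x k := by
    intro a
    by_cases hak : a = k
    · rw [hak]
    · refine Relation.TransGen.head_induction_on (hsc a k hak) ?_ ?_
      · intro a' h; exact step k rfl a' h
      · intro a' c h' _ ih; exact step c ih a' h'
  intro a b; rw [main a, main b]

def eqCompl {n : ℕ} (i : Fin n) : {j : Fin n // j = i} ⊕ {j : Fin n // j ≠ i} ≃ Fin n :=
  Equiv.sumCompl (· = i)

@[simp] lemma eqCompl_inl {n : ℕ} (i : Fin n) (a : {j : Fin n // j = i}) :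
    eqCompl i (Sum.inl a) = a.val := rfl

@[simp] lemma eqCompl_inr {n : ℕ} (i : Fin n) (a : {j : Fin n // j ≠ i}) :
    eqCompl i (Sum.inr a) = a.val := rfl

lemma adjugate_diag_eq (M : Matrix (Fin n) (Fin n) ℝ) (i : Fin n) :
    M.adjugate i i = (M.submatrix (fun k : {j : Fin n // j ≠ i} => (k : Fin n))
      (fun k : {j : Fin n // j ≠ i} => (k : Fin n))).det := by
  rw [Matrix.adjugate_apply]
  set N := M.updateRow i (Pi.single i 1) with hN
  rw [← Matrix.det_submatrix_equiv_self (eqCompl i)]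
  haveI : Unique {j : Fin n // j = i} := ⟨⟨⟨i, rfl⟩⟩, by rintro ⟨_, rfl⟩; rfl⟩
  have hblock : N.submatrix (eqCompl i) (eqCompl i) =
      Matrix.fromBlocks 1 0
        (Matrix.of fun (k : {j : Fin n // j ≠ i}) (_ : {j : Fin n // j = i}) => N k.val i)
        (N.submatrix (fun k : {j : Fin n // j ≠ i} => (k : Fin n))
          (fun k : {j : Fin n // j ≠ i} => (k : Fin n))) := by
    ext a b
    rcases a with a | a <;> rcases b with b | b
    · rcases a with ⟨a, rfl⟩
      rcases b with ⟨b, hb⟩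
      subst hb
      simp only [Matrix.submatrix_apply, Matrix.fromBlocks_apply₁₁, eqCompl_inl]
      simp [hN, Matrix.updateRow_self, Matrix.one_apply]
    · rcases a with ⟨a, rfl⟩
      simp only [Matrix.submatrix_apply, Matrix.fromBlocks_apply₁₂, eqCompl_inl, eqCompl_inr]
      simp [hN, Matrix.updateRow_self, Pi.single_apply, (Ne.symm b.2 : ¬ a = b.val)]
    · rcases b with ⟨b, rfl⟩
      simp only [Matrix.submatrix_apply, Matrix.fromBlocks_apply₂₁, Matrix.of_apply,
        eqCompl_inl, eqCompl_inr]
    · rfl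
  rw [hblock, Matrix.det_fromBlocks_zero₁₂, Matrix.det_one, one_mul]
  congr 1
  ext k l
  simp only [Matrix.submatrix_apply, hN]
  exact congrFun (Matrix.updateRow_ne k.2) l.val

lemma minorDet_pos_s4 (hn : 2 ≤ n) {B : Matrix (Fin n) (Fin n) ℝ}
    (hB : ∀ i j, 0 ≤ B i j) (hd : ∀ i, B i i = 0) (hsc : StronglyConnected B) (i : Fin n) :
    0 < minorDet B i := by
  haveI : Nontrivial (Fin n) := ⟨⟨0, by omega⟩, ⟨1, by omega⟩, by simp [Fin.ext_iff]⟩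
  obtain ⟨j0, hj0⟩ := exists_ne i
  haveI hne : Nonempty {j : Fin n // j ≠ i} := ⟨⟨j0, hj0⟩⟩
  set B' : Matrix {j : Fin n // j ≠ i} {j : Fin n // j ≠ i} ℝ :=
    (lapOf B).submatrix (fun k => (k : Fin n)) (fun k => (k : Fin n)) with hB'
  have hdnn : ∀ u : Fin n, 0 ≤ inDeg B u := fun u =>
    Finset.sum_nonneg fun j _ => abs_nonneg _
  have hsubsum : ∀ u : Fin n, ∑ l : {j : Fin n // j ≠ i}, B u l.val
      = ∑ l ∈ Finset.univ.erase i, B u l := by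
    intro u
    exact (Finset.sum_subtype (Finset.univ.erase i)
      (fun x => by simp [Finset.mem_erase]) (fun l => B u l)).symm
  have herase : ∀ u : Fin n, ∑ l ∈ Finset.univ.erase i, B u l + B u i = inDeg B u := by
    intro u
    rw [inDeg_eq_sum hB]
    exact Finset.sum_erase_add Finset.univ _ (Finset.mem_univ i)
  -- kernel triviality for s ≥ 0
  have hker : ∀ s : ℝ, 0 ≤ s → ∀ v : {j : Fin n // j ≠ i} → ℝ,
      (s • (1 : Matrix {j : Fin n // j ≠ i} {j : Fin n // j ≠ i} ℝ) + B') *ᵥ v = 0 → v = 0 := by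
    intro s hs v hv
    by_contra hv0
    obtain ⟨k, -, hk⟩ := Finset.exists_max_image Finset.univ (fun l => |v l|)
      Finset.univ_nonempty
    set Mx := |v k| with hMxdef
    have hMx : 0 < Mx := by
      obtain ⟨l, hl⟩ := Function.ne_iff.mp hv0
      exact lt_of_lt_of_le (abs_pos.mpr hl) (hk l (Finset.mem_univ l))
    have key : ∀ u : {j : Fin n // j ≠ i},
        (s + inDeg B u.val) * v u = ∑ l : {j : Fin n // j ≠ i}, B u.val l.val * v l := by
      intro u
      have h1 : ∑ l : {j : Fin n // j ≠ i},
          (s • (1 : Matrix {j : Fin n // j ≠ i} {j : Fin n // j ≠ i} ℝ) + B') u l * v l = 0 := by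
        have h0 := congrFun hv u
        simpa [Matrix.mulVec, dotProduct] using h0
      have h2 : ∀ l : {j : Fin n // j ≠ i},
          (s • (1 : Matrix {j : Fin n // j ≠ i} {j : Fin n // j ≠ i} ℝ) + B') u l * v l
          = (if u = l then (s + inDeg B u.val) * v l else 0) - B u.val l.val * v l := by
        intro l
        by_cases h : u = l
        · subst h
          simp only [hB', Matrix.add_apply, Matrix.smul_apply, Matrix.one_apply,
            Matrix.submatrix_apply, lapOf, Matrix.sub_apply, Matrix.diagonal_apply,
            if_pos rfl, hd u.val, smul_eq_mul, if_true]
          ring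
        · have hval : u.val ≠ l.val := fun hc => h (Subtype.ext hc)
          simp [hB', Matrix.one_apply, h, hval, lapOf, Matrix.diagonal_apply]
      rw [Finset.sum_congr rfl fun l _ => h2 l, Finset.sum_sub_distrib,
        Finset.sum_ite_eq Finset.univ u (fun l => (s + inDeg B u.val) * v l)] at h1
      simp only [Finset.mem_univ, if_true] at h1
      linarith
    have main1 : ∀ u : {j : Fin n // j ≠ i}, |v u| = Mx →
        B u.val i = 0 ∧ ∀ l : {j : Fin n // j ≠ i}, B u.val l.val ≠ 0 → |v l| = Mx := by
      intro u hu
      have h1 : (s + inDeg B u.val) * Mx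
          ≤ ∑ l : {j : Fin n // j ≠ i}, B u.val l.val * |v l| := by
        have habs : |(s + inDeg B u.val) * v u| = (s + inDeg B u.val) * Mx := by
          rw [abs_mul, abs_of_nonneg (by linarith [hdnn u.val] : (0:ℝ) ≤ s + inDeg B u.val), hu]
        calc (s + inDeg B u.val) * Mx = |(s + inDeg B u.val) * v u| := habs.symm
          _ = |∑ l : {j : Fin n // j ≠ i}, B u.val l.val * v l| := by rw [key u]
          _ ≤ ∑ l : {j : Fin n // j ≠ i}, |B u.val l.val * v l| :=
              Finset.abs_sum_le_sum_abs _ _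
          _ = ∑ l : {j : Fin n // j ≠ i}, B u.val l.val * |v l| :=
              Finset.sum_congr rfl fun l _ => by rw [abs_mul, abs_of_nonneg (hB _ _)]
      have h2 : ∑ l : {j : Fin n // j ≠ i}, B u.val l.val * |v l|
          ≤ ∑ l : {j : Fin n // j ≠ i}, B u.val l.val * Mx :=
        Finset.sum_le_sum fun l _ =>
          mul_le_mul_of_nonneg_left (hk l (Finset.mem_univ l)) (hB _ _)
      have h3 : ∑ l : {j : Fin n // j ≠ i}, B u.val l.val * Mx
          = (inDeg B u.val - B u.val i) * Mx := by
        rw [← Finset.sum_mul, hsubsum]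
        have := herase u.val
        have h4 : ∑ l ∈ Finset.univ.erase i, B u.val l = inDeg B u.val - B u.val i := by
          linarith
        rw [h4]
      have hBui : 0 ≤ B u.val i := hB _ _
      have hle : (s + inDeg B u.val) * Mx ≤ (inDeg B u.val - B u.val i) * Mx := by
        calc (s + inDeg B u.val) * Mx ≤ ∑ l : {j : Fin n // j ≠ i}, B u.val l.val * Mx :=
              le_trans h1 h2
          _ = _ := h3
      have hs0 : B u.val i = 0 := by nlinarith
      have hseq : s = 0 := by nlinarith
      have h4 : ∑ l : {j : Fin n // j ≠ i}, B u.val l.val * Mx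
          ≤ ∑ l : {j : Fin n // j ≠ i}, B u.val l.val * |v l| := by
        rw [h3, hs0]
        calc (inDeg B u.val - 0) * Mx = (s + inDeg B u.val) * Mx := by rw [hseq]; ring
          _ ≤ _ := h1
      have h5 : ∑ l : {j : Fin n // j ≠ i}, B u.val l.val * (Mx - |v l|) = 0 := by
        have h6 : ∑ l : {j : Fin n // j ≠ i},
            (B u.val l.val * Mx - B u.val l.val * |v l|) = 0 := by
          rw [Finset.sum_sub_distrib]
          linarith
        calc ∑ l : {j : Fin n // j ≠ i}, B u.val l.val * (Mx - |v l|)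
            = ∑ l : {j : Fin n // j ≠ i}, (B u.val l.val * Mx - B u.val l.val * |v l|) :=
              Finset.sum_congr rfl fun l _ => by ring
          _ = 0 := h6
      refine ⟨hs0, fun l hl => ?_⟩
      have h7 := (Finset.sum_eq_zero_iff_of_nonneg (fun l _ =>
        mul_nonneg (hB _ _) (by linarith [hk l (Finset.mem_univ l)]))).mp h5 l (Finset.mem_univ l)
      rcases mul_eq_zero.mp h7 with h | h
      · exact absurd h hl
      · linarith [hk l (Finset.mem_univ l)]
    have prop : ∀ b : Fin n, Relation.TransGen (fun u w => B w u ≠ 0) i b →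
        ∀ hb : b ≠ i, |v ⟨b, hb⟩| = Mx → False := by
      intro b hTG
      induction hTG with
      | @single c h => intro hb hvb; exact h (main1 ⟨c, hb⟩ hvb).1
      | @tail c d _ h ih =>
        intro hcnd hvc
        by_cases hbi : c = i
        · subst hbi; exact h (main1 ⟨d, hcnd⟩ hvc).1
        · exact ih hbi ((main1 ⟨d, hcnd⟩ hvc).2 ⟨c, hbi⟩ h)
    exact prop k.val (hsc i k.val (Ne.symm k.2)) k.2 hMxdef.symm
  have hnz : ∀ s : ℝ, 0 ≤ s →
      (s • (1 : Matrix {j : Fin n // j ≠ i} {j : Fin n // j ≠ i} ℝ) + B').det ≠ 0 := by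
    intro s hs hdet
    obtain ⟨v, hv0, hv⟩ := (Matrix.exists_mulVec_eq_zero_iff).mpr hdet
    exact hv0 (hker s hs v hv)
  have hcont : Continuous fun s : ℝ =>
      (s • (1 : Matrix {j : Fin n // j ≠ i} {j : Fin n // j ≠ i} ℝ) + B').det :=
    ((continuous_id.smul continuous_const).add continuous_const).matrix_det
  have hpoly : ∀ s : ℝ, ((-B').charpoly).eval s
      = (s • (1 : Matrix {j : Fin n // j ≠ i} {j : Fin n // j ≠ i} ℝ) + B').det := by
    intro s
    rw [Matrix.charpoly, ← Polynomial.coe_evalRingHom, RingHom.map_det]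
    congr 1
    ext a b
    by_cases hab : a = b
    · subst hab
      simp [Matrix.charmatrix_apply_eq, Matrix.one_apply]
    · simp [Matrix.charmatrix_apply_ne _ _ _ hab, Matrix.one_apply, hab]
  have hdeg : 0 < ((-B').charpoly).degree := by
    rw [← Polynomial.natDegree_pos_iff_degree_pos, Matrix.charpoly_natDegree_eq_dim]
    exact Fintype.card_pos
  have htends : Tendsto (fun s : ℝ =>
      (s • (1 : Matrix {j : Fin n // j ≠ i} {j : Fin n // j ≠ i} ℝ) + B').det) atTop atTop := by
    have h := Polynomial.tendsto_atTop_of_leadingCoeff_nonneg ((-B').charpoly) hdeg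
      (by rw [(Matrix.charpoly_monic _).leadingCoeff]; norm_num)
    exact h.congr fun s => hpoly s
  obtain ⟨s₀, hs₀pos, hs₀0⟩ :=
    ((htends.eventually_gt_atTop 0).and (eventually_ge_atTop (0:ℝ))).exists
  have hmd : minorDet B i
      = ((0:ℝ) • (1 : Matrix {j : Fin n // j ≠ i} {j : Fin n // j ≠ i} ℝ) + B').det := by
    unfold minorDet
    rw [lapBar_eq_lapOf hB]
    simp [hB']
  rw [hmd]
  by_contra hle
  push_neg at hle
  have hlt : ((0:ℝ) • (1 : Matrix {j : Fin n // j ≠ i} {j : Fin n // j ≠ i} ℝ) + B').det < 0 :=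
    lt_of_le_of_ne hle (hnz 0 le_rfl)
  obtain ⟨s, hsmem, hs0⟩ := intermediate_value_Icc hs₀0 hcont.continuousOn
    ⟨le_of_lt hlt, le_of_lt hs₀pos⟩
  exact hnz s hsmem.1 hs0

lemma lap_rows_sum_zero {B : Matrix (Fin n) (Fin n) ℝ} (hB : ∀ i j, 0 ≤ B i j) :
    lapOf B *ᵥ (fun _ => (1:ℝ)) = 0 := by
  funext u
  rw [lap_mulVec, inDeg_eq_sum hB]
  simp

lemma minorDet_eq_adjugate {B : Matrix (Fin n) (Fin n) ℝ} (hB : ∀ i j, 0 ≤ B i j) (k : Fin n) :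
    minorDet B k = (lapOf B).adjugate k k := by
  rw [adjugate_diag_eq]
  unfold minorDet
  rw [lapBar_eq_lapOf hB]

lemma w_left_null (hn : 2 ≤ n) {B : Matrix (Fin n) (Fin n) ℝ}
    (hB : ∀ i j, 0 ≤ B i j) (hsc : StronglyConnected B) (j : Fin n) :
    ∑ k, minorDet B k * lapOf B k j = 0 := by
  have hones := lap_rows_sum_zero hB
  have hdet : (lapOf B).det = 0 := by
    rw [← Matrix.exists_mulVec_eq_zero_iff]
    refine ⟨fun _ => 1, ?_, hones⟩
    exact Function.ne_iff.mpr ⟨⟨0, by omega⟩, one_ne_zero⟩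
  have hcol : ∀ a b, (lapOf B).adjugate a b = (lapOf B).adjugate b b := by
    intro a b
    have hxmul : lapOf B *ᵥ (fun k => (lapOf B).adjugate k b) = 0 := by
      funext c
      have h1 : (lapOf B * (lapOf B).adjugate) c b = 0 := by
        rw [Matrix.mul_adjugate, hdet]; simp
      rw [Matrix.mul_apply] at h1
      simpa [Matrix.mulVec, dotProduct] using h1
    exact ker_lap_const hn hB hsc hxmul a b
  have h2 : ((lapOf B).adjugate * lapOf B) j j = 0 := by
    rw [Matrix.adjugate_mul, hdet]; simp
  rw [Matrix.mul_apply] at h2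
  calc ∑ k, minorDet B k * lapOf B k j
      = ∑ k, (lapOf B).adjugate j k * lapOf B k j := by
        refine Finset.sum_congr rfl fun k _ => ?_
        rw [minorDet_eq_adjugate hB, hcol j k]
    _ = 0 := h2

lemma mirrorLap_apply (B : Matrix (Fin n) (Fin n) ℝ) (a b : Fin n) :
    mirrorLap B a b = (1/2) * (minorDet B a * lapOf B a b + lapOf B b a * minorDet B b) := by
  simp [mirrorLap, Wmat, Matrix.add_apply, Matrix.smul_apply, Matrix.diagonal_mul,
    Matrix.mul_diagonal, Matrix.transpose_apply, smul_eq_mul]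

lemma mirrorLap_row_sum (hn : 2 ≤ n) {B : Matrix (Fin n) (Fin n) ℝ}
    (hB : ∀ i j, 0 ≤ B i j) (hsc : StronglyConnected B) (a : Fin n) :
    ∑ b, mirrorLap B a b = 0 := by
  rw [Finset.sum_congr rfl fun b _ => mirrorLap_apply B a b, ← Finset.mul_sum]
  have h1 : ∑ b, (minorDet B a * lapOf B a b + lapOf B b a * minorDet B b)
      = minorDet B a * (∑ b, lapOf B a b) + ∑ b, minorDet B b * lapOf B b a := by
    rw [Finset.sum_add_distrib, Finset.mul_sum]
    congr 1
    exact Finset.sum_congr rfl fun b _ => by ring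
  have h2 : ∑ b, lapOf B a b = 0 := by
    have h := congrFun (lap_rows_sum_zero hB) a
    rw [lap_mulVec] at h
    simp only [mul_one, Pi.zero_apply] at h
    calc ∑ b, lapOf B a b = ∑ b, (Matrix.diagonal (inDeg B) a b - B a b) := rfl
      _ = (∑ b, Matrix.diagonal (inDeg B) a b) - ∑ b, B a b := Finset.sum_sub_distrib _ _
      _ = inDeg B a - ∑ b, B a b := by
          simp [Matrix.diagonal_apply, Finset.sum_ite_eq]
      _ = 0 := by linarith
  rw [h1, h2, w_left_null hn hB hsc a]
  ring

lemma core_ker (hn : 2 ≤ n) {B : Matrix (Fin n) (Fin n) ℝ}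
    (hB : ∀ i j, 0 ≤ B i j) (hd : ∀ i, B i i = 0) (hsc : StronglyConnected B)
    (x : Fin n → ℝ) :
    mirrorLap B *ᵥ x = 0 ↔ ∃ c : ℝ, x = fun _ => c := by
  have hwpos : ∀ k, 0 < minorDet B k := minorDet_pos_s4 hn hB hd hsc
  have hrow := mirrorLap_row_sum hn hB hsc
  have hmv : ∀ a, (mirrorLap B *ᵥ x) a = ∑ b, mirrorLap B a b * x b := fun a => rfl
  constructor
  · intro hx
    have hq0 : ∑ a, ∑ b, (-(mirrorLap B a b)) * (x a - x b)^2 = 0 := by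
      have hinner : ∀ a, ∑ b, (-(mirrorLap B a b)) * (x a - x b)^2
          = -((x a)^2 * ∑ b, mirrorLap B a b) + 2 * (x a * ((mirrorLap B *ᵥ x) a))
            - ∑ b, mirrorLap B a b * (x b)^2 := by
        intro a
        rw [hmv, Finset.mul_sum, Finset.mul_sum, Finset.mul_sum, ← Finset.sum_neg_distrib,
          ← Finset.sum_add_distrib, ← Finset.sum_sub_distrib]
        exact Finset.sum_congr rfl fun b _ => by ring
      rw [Finset.sum_congr rfl fun a _ => hinner a]
      have hz1 : ∀ a, -((x a)^2 * ∑ b, mirrorLap B a b) = 0 := fun a => by rw [hrow a]; ring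
      have hz2 : ∀ a, 2 * (x a * ((mirrorLap B *ᵥ x) a)) = 0 := fun a => by
        rw [hx]; simp
      have hz3 : ∑ a, ∑ b, mirrorLap B a b * (x b)^2 = 0 := by
        rw [Finset.sum_comm]
        have : ∀ b, ∑ a, mirrorLap B a b * (x b)^2 = 0 := by
          intro b
          have hsym : ∀ a, mirrorLap B a b = mirrorLap B b a := fun a => by
            rw [mirrorLap_apply, mirrorLap_apply]; ring
          rw [Finset.sum_congr rfl fun a _ => by rw [hsym a], ← Finset.sum_mul, hrow b]
          ring
        rw [Finset.sum_congr rfl fun b _ => this b]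
        simp
      rw [Finset.sum_sub_distrib, Finset.sum_add_distrib, hz3]
      rw [Finset.sum_congr rfl fun a _ => hz1 a, Finset.sum_congr rfl fun a _ => hz2 a]
      simp
    have hterm : ∀ a b, (0:ℝ) ≤ (-(mirrorLap B a b)) * (x a - x b)^2 := by
      intro a b
      by_cases hab : a = b
      · subst hab; simp
      · have h1 : lapOf B a b = -B a b := by
          simp [lapOf, Matrix.diagonal_apply, hab]
        have h2 : lapOf B b a = -B b a := by
          simp [lapOf, Matrix.diagonal_apply, Ne.symm hab]
        have h3 : -(mirrorLap B a b)
            = (1/2) * (minorDet B a * B a b + B b a * minorDet B b) := by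
          rw [mirrorLap_apply, h1, h2]; ring
        rw [h3]
        have := (hwpos a).le
        have := (hwpos b).le
        have := hB a b
        have := hB b a
        positivity
    have hz : ∀ a b, (-(mirrorLap B a b)) * (x a - x b)^2 = 0 := by
      have o := (Finset.sum_eq_zero_iff_of_nonneg (fun a _ =>
        Finset.sum_nonneg fun b _ => hterm a b)).mp hq0
      exact fun a b => (Finset.sum_eq_zero_iff_of_nonneg (fun b _ => hterm a b)).mp
        (o a (Finset.mem_univ a)) b (Finset.mem_univ b)
    have hedge : ∀ a b, B a b ≠ 0 → x a = x b := by
      intro a b hab0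
      have hne : a ≠ b := fun h => hab0 (by rw [h, hd b])
      have h1 : lapOf B a b = -B a b := by simp [lapOf, Matrix.diagonal_apply, hne]
      have h2 : lapOf B b a = -B b a := by simp [lapOf, Matrix.diagonal_apply, Ne.symm hne]
      have hpos : 0 < -(mirrorLap B a b) := by
        have h3 : -(mirrorLap B a b)
            = (1/2) * (minorDet B a * B a b + B b a * minorDet B b) := by
          rw [mirrorLap_apply, h1, h2]; ring
        rw [h3]
        have hBab : 0 < B a b := lt_of_le_of_ne (hB a b) (Ne.symm hab0)
        nlinarith [hwpos a, (hwpos b).le, hB b a]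
      have h4 : (x a - x b)^2 = 0 := by
        rcases mul_eq_zero.mp (hz a b) with h | h
        · exact absurd h (ne_of_gt hpos)
        · exact h
      have := pow_eq_zero_iff (two_ne_zero) |>.mp h4
      linarith [sub_eq_zero.mp this]
    have hall : ∀ a b, x a = x b := by
      intro a b
      rcases eq_or_ne a b with rfl | hab
      · rfl
      · have key : ∀ b', Relation.TransGen (fun u w => B w u ≠ 0) a b' → x a = x b' := by
          intro b' hTG
          induction hTG with
          | @single c h => exact (hedge c a h).symm
          | @tail c d _ h ih => exact ih.trans (hedge d c h).symm
        exact key b (hsc a b hab)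
    exact ⟨x ⟨0, by omega⟩, funext fun u => hall u ⟨0, by omega⟩⟩
  · rintro ⟨c, rfl⟩
    funext a
    rw [Pi.zero_apply, hmv, ← Finset.sum_mul, hrow a, zero_mul]

/-- `G` is structurally balanced iff the null space of `L̂` is
`span{D·1_n}` for a gauge transformation `D` with `D·A·D` nonnegative. -/
theorem balanced_iff_nullspace_span (n : ℕ) (hn : 2 ≤ n)
    (A : Matrix (Fin n) (Fin n) ℝ)
    (hdiag : ∀ i, A i i = 0) (hdigon : ∀ i j, 0 ≤ A i j * A j i)
    (hsc : StronglyConnected A) :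
    StructBalanced A ↔
      ∃ σ : Fin n → ℝ, IsGauge σ ∧ (∀ i j, 0 ≤ σ i * A i j * σ j) ∧
        (∀ x : Fin n → ℝ, mirrorLap A *ᵥ x = 0 ↔ ∃ c : ℝ, x = c • σ) := by
  constructor
  · rintro ⟨σ, hσ, hpos⟩
    set Abar : Matrix (Fin n) (Fin n) ℝ := Matrix.of (fun i j => |A i j|) with hAbar
    have hσsq : ∀ i, σ i * σ i = 1 := fun i => by rcases hσ i with h | h <;> rw [h] <;> norm_num
    have hA : ∀ i j, A i j = σ i * |A i j| * σ j := by
      intro i j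
      have h1 : σ i * A i j * σ j = |A i j| := by
        have h2 : |σ i * A i j * σ j| = |A i j| := by
          rcases hσ i with h | h <;> rcases hσ j with h' | h' <;> rw [h, h'] <;>
            simp [abs_mul]
        rw [← h2, abs_of_nonneg (hpos i j)]
      calc A i j = σ i * (σ i * A i j * σ j) * σ j := by
            rcases hσ i with h | h <;> rcases hσ j with h' | h' <;> rw [h, h'] <;> ring
        _ = σ i * |A i j| * σ j := by rw [h1]
    have hBnn : ∀ i j, 0 ≤ Abar i j := fun i j => abs_nonneg _
    have hBd : ∀ i, Abar i i = 0 := fun i => by simp [hAbar, hdiag i]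
    have hBsc : StronglyConnected Abar := by
      intro i j hij
      refine Relation.TransGen.mono ?_ _ _ (hsc i j hij)
      intro u v h
      simpa [hAbar] using h
    set D : Matrix (Fin n) (Fin n) ℝ := Matrix.diagonal σ with hD
    have hDD : D * D = 1 := by
      rw [hD, Matrix.diagonal_mul_diagonal]
      have h : (fun i => σ i * σ i) = fun _ => (1:ℝ) := funext hσsq
      rw [h, Matrix.diagonal_one]
    have hinDeg : inDeg Abar = inDeg A := by
      funext u
      unfold inDeg
      exact Finset.sum_congr rfl fun j _ => by simp [hAbar]
    have hlap : lapOf A = D * lapOf Abar * D := by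
      ext a b
      have hDMD : (D * lapOf Abar * D) a b = σ a * lapOf Abar a b * σ b := by
        rw [hD, Matrix.mul_diagonal, Matrix.diagonal_mul]
      rw [hDMD]
      unfold lapOf
      rw [hinDeg]
      rcases eq_or_ne a b with rfl | hab
      · rw [Matrix.sub_apply, Matrix.sub_apply, Matrix.diagonal_apply_eq, hdiag a, hBd a]
        linear_combination (-(inDeg A a)) * (hσsq a)
      · rw [Matrix.sub_apply, Matrix.sub_apply, Matrix.diagonal_apply_ne _ hab, hA a b]
        simp only [hAbar, Matrix.of_apply]
        ring
    have hlapbar : lapBar A = lapOf Abar := by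
      unfold lapBar lapOf
      rw [hinDeg]
    have hminor : minorDet A = minorDet Abar := by
      funext u
      unfold minorDet
      rw [hlapbar, lapBar_eq_lapOf hBnn]
    have hW : Wmat A = Wmat Abar := by unfold Wmat; rw [hminor]
    have hWD : Wmat Abar * D = D * Wmat Abar := by
      unfold Wmat
      rw [hD, Matrix.diagonal_mul_diagonal, Matrix.diagonal_mul_diagonal]
      have h : (fun i => minorDet Abar i * σ i) = fun i => σ i * minorDet Abar i :=
        funext fun u => mul_comm _ _
      rw [h]
    have key1 : ∀ M : Matrix (Fin n) (Fin n) ℝ,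
        Wmat Abar * (D * M * D) = D * (Wmat Abar * M) * D := by
      intro M
      simp only [← Matrix.mul_assoc]
      rw [hWD]
    have key2 : ∀ M : Matrix (Fin n) (Fin n) ℝ,
        (D * M * D) * Wmat Abar = D * (M * Wmat Abar) * D := by
      intro M
      rw [Matrix.mul_assoc (D * M) D (Wmat Abar), ← hWD]
      simp only [← Matrix.mul_assoc]
    have hmirror : mirrorLap A = D * mirrorLap Abar * D := by
      unfold mirrorLap
      rw [hW, hlap, Matrix.mul_smul, Matrix.smul_mul, Matrix.mul_add, Matrix.add_mul]
      congr 1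
      congr 1
      · exact key1 _
      · have htr : (D * lapOf Abar * D)ᵀ = D * (lapOf Abar)ᵀ * D := by
          rw [Matrix.transpose_mul, Matrix.transpose_mul, hD, Matrix.diagonal_transpose,
            Matrix.mul_assoc]
        rw [htr, key2]
    refine ⟨σ, hσ, hpos, fun x => ?_⟩
    have hmvDD : ∀ y : Fin n → ℝ, D *ᵥ (D *ᵥ y) = y := by
      intro y
      rw [Matrix.mulVec_mulVec, hDD, Matrix.one_mulVec]
    have hDinj : ∀ y : Fin n → ℝ, D *ᵥ y = 0 ↔ y = 0 := by
      intro y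
      constructor
      · intro h
        have := hmvDD y
        rw [h, Matrix.mulVec_zero] at this
        exact this.symm
      · rintro rfl; exact Matrix.mulVec_zero D
    have hmv : mirrorLap A *ᵥ x = D *ᵥ (mirrorLap Abar *ᵥ (D *ᵥ x)) := by
      rw [hmirror, Matrix.mulVec_mulVec, Matrix.mulVec_mulVec]
    rw [hmv, hDinj, core_ker hn hBnn hBd hBsc (D *ᵥ x)]
    constructor
    · rintro ⟨c, hc⟩
      refine ⟨c, ?_⟩
      have h1 : D *ᵥ (D *ᵥ x) = D *ᵥ (fun _ => c) := by rw [hc]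
      rw [hmvDD] at h1
      rw [h1]
      funext u
      simp [hD, Matrix.mulVec_diagonal, Pi.smul_apply, smul_eq_mul]
      ring
    · rintro ⟨c, rfl⟩
      refine ⟨c, ?_⟩
      funext u
      simp [hD, Matrix.mulVec_diagonal, Pi.smul_apply, smul_eq_mul]
      calc σ u * (c * σ u) = c * (σ u * σ u) := by ring
        _ = c := by rw [hσsq u]; ring
  · rintro ⟨σ, hσ, hpos, -⟩
    exact ⟨σ, hσ, hpos⟩
end
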